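/- Let R be a commutative ring of characteristic p > 0 and let M and N be R-modules. If θ : M → N is an additive (ℤ-linear) differential operator of order ≤ n, i.e. θ ∈ D^n_ℤ(M,N), then for every power q = p^e with q > n, θ is R^q-linear: θ(r^q · m) = r^q · θ(m) for all r ∈ R and m ∈ M. -/

import Mathlib

/-- `IsDiffOpOfOrder R n f` : the map `f : M → N` is a differential operator of order at most
`n` relative to `R`, in the inductive sense. -/
def IsDiffOpOfOrder (R : Type*) [CommRing R] {M N : Type*} [AddCommGroup M] [Module R M]
    [AddCommGroup N] [Module R N] : ℕ → (M → N) → Prop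
  | 0, f => ∀ (r : R) (m : M), f (r • m) = r • f m
  | n + 1, f => ∀ r : R, IsDiffOpOfOrder R n (fun m => r • f m - f (r • m))

section Aux

set_option linter.unusedSectionVars false

variable {R : Type*} [CommRing R] {M N : Type*} [AddCommGroup M] [Module R M]
    [AddCommGroup N] [Module R N]

/-- Left multiplication by `r` on the codomain, as an endomorphism of `M →+ N`. -/
def lmulE (r : R) : AddMonoid.End (M →+ N) :=
  AddMonoidHom.mk' (fun f => r • f) (fun f g => smul_add r f g)

/-- Precomposition with `r • ·`, as an endomorphism of `M →+ N`. -/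
def rmulE (r : R) : AddMonoid.End (M →+ N) :=
  AddMonoidHom.mk' (fun f => f.comp (DistribMulAction.toAddMonoidHom M r))
    (fun f g => by ext m; simp)

@[simp] lemma lmulE_apply (r : R) (f : M →+ N) (m : M) : (lmulE r f) m = r • f m := rfl
@[simp] lemma rmulE_apply (r : R) (f : M →+ N) (m : M) : (rmulE r f) m = f (r • m) := rfl

lemma commute_lmulE_rmulE (r : R) : Commute (lmulE r) (rmulE (M := M) (N := N) r) := by
  refine AddMonoidHom.ext fun f => AddMonoidHom.ext fun m => ?_
  show (lmulE r (rmulE r f)) m = (rmulE r (lmulE r f)) m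
  simp

lemma lmulE_pow (r : R) (k : ℕ) (f : M →+ N) (m : M) :
    ((lmulE r ^ k) f) m = r ^ k • f m := by
  induction k with
  | zero => simp
  | succ k ih =>
      rw [pow_succ']
      show ((lmulE r) ((lmulE r ^ k) f)) m = r ^ (k + 1) • f m
      rw [lmulE_apply, ih, smul_smul, ← pow_succ']

lemma rmulE_pow (r : R) (k : ℕ) (f : M →+ N) (m : M) :
    ((rmulE r ^ k) f) m = f (r ^ k • m) := by
  induction k generalizing m with
  | zero => simp
  | succ k ih =>
      rw [pow_succ']
      show ((rmulE r) ((rmulE r ^ k) f)) m = f (r ^ (k + 1) • m)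
      rw [rmulE_apply, ih, smul_smul, ← pow_succ]

lemma diffOp_pow_vanish (n : ℕ) (f : M →+ N) (hf : IsDiffOpOfOrder R n ⇑f) (r : R) :
    (((lmulE r - rmulE r) ^ (n + 1) : AddMonoid.End (M →+ N))) f = 0 := by
  induction n generalizing f with
  | zero =>
      refine AddMonoidHom.ext fun m => ?_
      show ((lmulE r - rmulE r : AddMonoid.End (M →+ N)) f) m = 0
      rw [show ((lmulE r - rmulE r : AddMonoid.End (M →+ N)) f) m = r • f m - f (r • m) from rfl,
        sub_eq_zero]
      exact (hf r m).symm
  | succ n ih =>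
      have h1 : ⇑((lmulE r - rmulE r : AddMonoid.End (M →+ N)) f)
          = fun m => r • f m - f (r • m) := by
        funext m
        rfl
      rw [pow_succ]
      show (((lmulE r - rmulE r) ^ (n + 1) : AddMonoid.End (M →+ N)))
        ((lmulE r - rmulE r : AddMonoid.End (M →+ N)) f) = 0
      exact ih _ (h1 ▸ hf r)

end Aux

/-- **Proposition.** Over a commutative ring `R` of characteristic `p > 0`, an additive
differential operator `θ : M → N` of order `≤ n` is `R^q`-linear for every `q = p^e > n`. -/
theorem frobLinear_of_isDiffOpOfOrder
    (p : ℕ) (hp : p.Prime) (R : Type*) [CommRing R] [CharP R p]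
    {M N : Type*} [AddCommGroup M] [Module R M] [AddCommGroup N] [Module R N]
    (θ : M →+ N) (n : ℕ) (hθ : IsDiffOpOfOrder R n ⇑θ)
    (e : ℕ) (hq : n < p ^ e) :
    ∀ (r : R) (m : M), θ (r ^ p ^ e • m) = r ^ p ^ e • θ m := by
  intro r m
  have hpN : ∀ x : N, p • x = 0 := by
    intro x
    rw [← Nat.cast_smul_eq_nsmul R p x, CharP.cast_eq_zero, zero_smul]
  -- vanishing of the q-th power of the bracket applied to θ
  have hvan : (((lmulE r - rmulE r) ^ p ^ e : AddMonoid.End (M →+ N))) θ = 0 := by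
    obtain ⟨k, hk⟩ : ∃ k, p ^ e = k + (n + 1) := ⟨p ^ e - (n + 1), by omega⟩
    rw [hk, pow_add]
    show (((lmulE r - rmulE r) ^ k : AddMonoid.End (M →+ N)))
      ((((lmulE r - rmulE r) ^ (n + 1) : AddMonoid.End (M →+ N))) θ) = 0
    rw [diffOp_pow_vanish n θ hθ r, map_zero]
  -- binomial identity for prime powers
  have hcomm : Commute (lmulE r) (-(rmulE (M := M) (N := N) r)) :=
    (commute_lmulE_rmulE r).neg_right
  have hbin := hcomm.add_pow_prime_pow_eq hp e
  rw [← sub_eq_add_neg] at hbin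
  have h0 := congrArg (fun T : AddMonoid.End (M →+ N) => (T θ) m) hbin
  rw [hvan] at h0
  -- the middle (mod p) term vanishes
  have hmid : ∀ S : AddMonoid.End (M →+ N), (((p : AddMonoid.End (M →+ N)) * S) θ) m = 0 := by
    intro S
    rw [← nsmul_eq_mul]
    have : ((p • S : AddMonoid.End (M →+ N)) θ) m = p • (S θ m) := by simp
    rw [this, hpN]
  have hadd : ∀ A B : AddMonoid.End (M →+ N), ((A + B) θ) m = (A θ) m + (B θ) m :=
    fun _ _ => rfl
  rw [hadd, hadd, mul_assoc, mul_assoc, hmid, AddMonoidHom.zero_apply, lmulE_pow] at h0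
  -- now h0 : 0 = r ^ p ^ e • θ m + ((-rmulE r) ^ p ^ e θ) m + 0
  have key : r ^ p ^ e • θ m + (((-rmulE r : AddMonoid.End (M →+ N)) ^ p ^ e) θ) m = 0 := by
    rw [add_zero] at h0; exact h0.symm
  rcases Nat.even_or_odd (p ^ e) with hpar | hpar
  · -- even case: necessarily p = 2, and everything has exponent 2
    rw [hpar.neg_pow, rmulE_pow] at key
    have hp2 : p = 2 := by
      rcases hp.eq_two_or_odd' with h | hodd
      · exact h
      · exact absurd (hodd.pow) ((Nat.not_odd_iff_even.mpr hpar))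
    have h2 : ∀ x : N, x + x = 0 := by
      intro x
      have := hpN x
      rwa [hp2, two_nsmul] at this
    have := key
    -- r^q • θ m + θ (r^q • m) = 0  and  x + x = 0 gives the claim
    have h3 : θ (r ^ p ^ e • m) = -(r ^ p ^ e • θ m) := by
      rw [eq_neg_iff_add_eq_zero, add_comm]; exact this
    rw [h3, neg_eq_iff_add_eq_zero, h2]
  · -- odd case
    have hneg : ∀ A : AddMonoid.End (M →+ N), ((-A) θ) m = -((A θ) m) := fun _ => rfl
    rw [hpar.neg_pow, hneg, rmulE_pow,
      add_neg_eq_zero] at key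
    exact key.symm
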